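/- If there exists a q-ary [n,k,d] linear code with locality r, then there exists a q-ary linear code of length n-1, dimension at least k-1, minimum distance at least d, and locality r, obtained by deleting from a parity-check matrix a column not belonging to a chosen set of d linearly dependent columns. -/
import Mathlib


open Finset

/-- `R` (containing `i`) is a recovery set at coordinate `i` for the code `C`. -/
def IsRecoverySet {F : Type*} [Field F] {ι : Type*} [Fintype ι]
    (C : Submodule F (ι → F)) (i : ι) (R : Finset ι) : Prop :=
  i ∈ R ∧ ∀ u ∈ C, ∀ v ∈ C, (∀ j ∈ R, j ≠ i → u j = v j) → u i = v i

/-- `C` has locality `r`: every coordinate has a recovery set of size at most `r+1`. -/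
def HasLocality {F : Type*} [Field F] {ι : Type*} [Fintype ι]
    (C : Submodule F (ι → F)) (r : ℕ) : Prop :=
  ∀ i : ι, ∃ R : Finset ι, R.card ≤ r + 1 ∧ IsRecoverySet C i R

/-- Every nonzero codeword of `C` has Hamming weight at least `d`. -/
def DistAtLeast {F : Type*} [Field F] [DecidableEq F] {ι : Type*} [Fintype ι]
    (C : Submodule F (ι → F)) (d : ℕ) : Prop :=
  ∀ c ∈ C, c ≠ 0 → d ≤ hammingNorm c

/-- `C` has minimum distance exactly `d`. -/
def IsMinDist {F : Type*} [Field F] [DecidableEq F] {ι : Type*} [Fintype ι]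
    (C : Submodule F (ι → F)) (d : ℕ) : Prop :=
  (∃ c ∈ C, c ≠ 0 ∧ hammingNorm c = d) ∧ DistAtLeast C d

/-- if there exists a `q`-ary `[n,k,d]` linear code with locality `r`, then there
exists a `q`-ary linear code of length `n-1`, dimension at least `k-1`, minimum distance at
least `d`, and locality `r` (delete a suitable column of a parity-check matrix). -/
theorem shorten_parity_check {q n k d r : ℕ}
    {F : Type*} [Field F] [Fintype F] [DecidableEq F] (hq : Fintype.card F = q)
    (C : Submodule F (Fin n → F))
    (hk : Module.finrank F C = k) (hd : IsMinDist C d) (hloc : HasLocality C r) :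
    ∃ C' : Submodule F (Fin (n - 1) → F),
      k - 1 ≤ Module.finrank F C' ∧ DistAtLeast C' d ∧ HasLocality C' r := by
  classical
  have hn : 0 < n := by
    rcases Nat.eq_zero_or_pos n with h | h
    · subst h
      obtain ⟨c, -, hc0, -⟩ := hd.1
      exact absurd (funext fun x => x.elim0) hc0
    · exact h
  obtain ⟨m, rfl⟩ : ∃ m, n = m + 1 := ⟨n - 1, (Nat.succ_pred_eq_of_pos hn).symm⟩
  set φ : (Fin (m + 1) → F) →ₗ[F] (Fin m → F) := LinearMap.funLeft F F Fin.castSucc with hφ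
  set P : (Fin (m + 1) → F) →ₗ[F] F := LinearMap.proj (Fin.last m) with hP
  set S : Submodule F (Fin (m + 1) → F) := C ⊓ LinearMap.ker P with hS
  set g : ↥S →ₗ[F] (Fin m → F) := φ.comp S.subtype with hg
  have happ : ∀ (u : Fin (m + 1) → F) (t : Fin m), φ u t = u (Fin.castSucc t) := by
    intro u t; rfl
  have hmem : ∀ x ∈ LinearMap.range g, ∃ u ∈ C, u (Fin.last m) = 0 ∧ x = φ u := by
    rintro x ⟨⟨u, hu⟩, rfl⟩
    exact ⟨u, hu.1, hu.2, rfl⟩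
  have hinj : Function.Injective g := by
    rintro ⟨u, hu⟩ ⟨v, hv⟩ huv
    apply Subtype.ext
    funext x
    rcases Fin.eq_castSucc_or_eq_last x with ⟨t, rfl⟩ | rfl
    · exact congrFun huv t
    · show u (Fin.last m) = v (Fin.last m)
      rw [show u (Fin.last m) = 0 from hu.2, show v (Fin.last m) = 0 from hv.2]
  refine ⟨LinearMap.range g, ?_, ?_, ?_⟩
  · have h1 := LinearMap.finrank_range_of_inj hinj
    have h2 := Submodule.finrank_sup_add_finrank_inf_eq C (LinearMap.ker P)
    have h3 := LinearMap.finrank_range_add_finrank_ker P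
    have h4 : Module.finrank F (Fin (m + 1) → F) = m + 1 := by
      simp [Module.finrank_pi]
    have h5 : Module.finrank F (LinearMap.range P) ≤ 1 :=
      le_trans (Submodule.finrank_le _) (le_of_eq (Module.finrank_self F))
    have h6 : Module.finrank F ↥(C ⊔ LinearMap.ker P) ≤ m + 1 :=
      le_trans (Submodule.finrank_le _) (le_of_eq h4)
    rw [hk] at h2
    rw [h4] at h3
    have main : ∀ b c s kp i : ℕ, b + s = k + kp → c + kp = m + 1 → c ≤ 1 →
        b ≤ m + 1 → i = s → k - 1 ≤ i := by
      intros; omega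
    exact main _ _ _ _ _ h2 h3 h5 h6 h1
  · intro c hc hc0
    obtain ⟨u, hu, hul, rfl⟩ := hmem c hc
    have hu0 : u ≠ 0 := by rintro rfl; exact hc0 (map_zero φ)
    refine le_trans (hd.2 u hu hu0) ?_
    unfold hammingNorm
    apply Finset.card_le_card_of_surjOn Fin.castSucc
    intro x hx
    simp only [Finset.coe_filter, Set.mem_setOf_eq, Finset.mem_univ, true_and] at hx ⊢
    rcases Fin.eq_castSucc_or_eq_last x with ⟨t, rfl⟩ | rfl
    · exact ⟨t, by simp only [Set.mem_setOf_eq, happ u t]; exact hx, rfl⟩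
    · exact absurd hul hx
  · intro j
    obtain ⟨R, hRcard, hRi, hRrec⟩ := hloc (Fin.castSucc j)
    set f : Fin (m + 1) → Fin m := fun x => if h : (x : ℕ) < m then ⟨x, h⟩ else j with hf
    have hfc : ∀ t : Fin m, f (Fin.castSucc t) = t := by
      intro t
      simp only [hf, Fin.coe_castSucc, t.isLt, dif_pos]
    refine ⟨R.image f, le_trans Finset.card_image_le hRcard,
      Finset.mem_image.2 ⟨Fin.castSucc j, hRi, hfc j⟩, ?_⟩
    intro u' hu' v' hv' hagree
    obtain ⟨u, hu, hul, rfl⟩ := hmem u' hu'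
    obtain ⟨v, hv, hvl, rfl⟩ := hmem v' hv'
    rw [happ, happ]
    refine hRrec u hu v hv ?_
    intro x hxR hxne
    rcases Fin.eq_castSucc_or_eq_last x with ⟨t, rfl⟩ | rfl
    · have ht : t ∈ R.image f := Finset.mem_image.2 ⟨_, hxR, hfc t⟩
      have htj : t ≠ j := fun h => hxne (congrArg Fin.castSucc h)
      have := hagree t ht htj
      rw [happ, happ] at this
      exact this
    · rw [hul, hvl]
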